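/- The operators Δ̂_G and Δ̂_Ḡ are mutually adjoint on Schwartz functions: for all Schwartz functions φ, ψ on E, ⟨Δ̂_Ḡ φ, ψ⟩ = ⟨φ, Δ̂_G ψ⟩, where ⟨φ,ψ⟩ = ∫_E φ(θ) conj(ψ(θ)) dvol(θ). Consequently, for t = k + is with s ∈ ℝ, ⟨φ, (1/(2t)) Δ̂_G ψ⟩ = ⟨(1/(2t̄)) Δ̂_Ḡ φ, ψ⟩. -/

import Mathlib

open MeasureTheory Complex
open scoped Real RealInnerProductSpace BigOperators

noncomputable section

/-- `ℝⁿ` as a Euclidean space. -/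
abbrev EN (n : ℕ) := EuclideanSpace ℝ (Fin n)

/-- The first order operator `D f(θ) = df_θ[v] + 2πi c ⟨v,θ⟩ f(θ)`; with
`c = σ̄⁻¹` (resp. `c = σ⁻¹`) and `v = b_j` it is `D_{σ,j}` (resp. `D_{σ̄,j}`). -/
def Dop {n : ℕ} (c : ℂ) (v : EN n) (f : EN n → ℂ) : EN n → ℂ :=
  fun θ => fderiv ℝ f θ v + 2 * (π : ℂ) * I * c * (⟪v, θ⟫ : ℂ) * f θ

/-- The Gram matrix `C_{pq} = ⟨b_p, b_q⟩` of the basis `b`. -/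
def Cmat {n : ℕ} (b : Fin n → EN n) : Matrix (Fin n) (Fin n) ℝ :=
  Matrix.of fun p q => ⟪b p, b q⟫

/-- `Δ̂_G = (ik/π)(σ̄/(σ̄−σ))² Σ_{p,q} C^{pq} D_{σ,p} D_{σ,q}`. -/
def DeltaG {n : ℕ} (k : ℕ) (σ : ℂ) (b : Fin n → EN n) (f : EN n → ℂ) : EN n → ℂ :=
  fun θ => I * (k : ℂ) / (π : ℂ) * (starRingEnd ℂ σ / (starRingEnd ℂ σ - σ)) ^ 2 *
    ∑ p, ∑ q, ((Cmat b)⁻¹ p q : ℂ) *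
      Dop (starRingEnd ℂ σ)⁻¹ (b p) (Dop (starRingEnd ℂ σ)⁻¹ (b q) f) θ

/-- `Δ̂_Ḡ = −(ik/π)(σ/(σ−σ̄))² Σ_{p,q} C^{pq} D_{σ̄,p} D_{σ̄,q}`. -/
def DeltaGbar {n : ℕ} (k : ℕ) (σ : ℂ) (b : Fin n → EN n) (f : EN n → ℂ) : EN n → ℂ :=
  fun θ => -(I * (k : ℂ) / (π : ℂ)) * (σ / (σ - starRingEnd ℂ σ)) ^ 2 *
    ∑ p, ∑ q, ((Cmat b)⁻¹ p q : ℂ) *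
      Dop σ⁻¹ (b p) (Dop σ⁻¹ (b q) f) θ

namespace CSAux

variable {n : ℕ}

/-- Conjugation of a Schwartz map. -/
def conjS (f : SchwartzMap (EN n) ℂ) : SchwartzMap (EN n) ℂ where
  toFun := fun x => starRingEnd ℂ (f x)
  smooth' := by
    have : (fun x => starRingEnd ℂ (f x)) = (RCLike.conjLIE (K := ℂ)) ∘ ⇑f := rfl
    rw [this]
    exact ((RCLike.conjLIE (K := ℂ)).toLinearIsometry.toContinuousLinearMap.contDiff).comp
      (f.smooth ⊤)
  decay' := by
    intro k m
    obtain ⟨C, hC⟩ := f.decay' k m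
    refine ⟨C, fun x => ?_⟩
    have : (fun x => starRingEnd ℂ (f x)) = (RCLike.conjLIE (K := ℂ)) ∘ ⇑f := rfl
    rw [this, LinearIsometryEquiv.norm_iteratedFDeriv_comp_left]
    exact hC x

@[simp] lemma conjS_apply (f : SchwartzMap (EN n) ℂ) (x : EN n) :
    conjS f x = starRingEnd ℂ (f x) := rfl

/-- Multiplication by `⟨v, θ⟩` as a map on Schwartz space. -/
def mulInnerS (v : EN n) : SchwartzMap (EN n) ℂ →L[ℝ] SchwartzMap (EN n) ℂ :=
  SchwartzMap.bilinLeftCLM (ContinuousLinearMap.mul ℝ ℂ)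
    ((Complex.ofRealCLM.comp (innerSL ℝ v)).hasTemperateGrowth)

@[simp] lemma mulInnerS_apply (v : EN n) (f : SchwartzMap (EN n) ℂ) (x : EN n) :
    mulInnerS v f x = f x * (⟪v, x⟫ : ℂ) := rfl

/-- The operator `Dop` as a map on Schwartz space. -/
def DopS (c : ℂ) (v : EN n) (f : SchwartzMap (EN n) ℂ) : SchwartzMap (EN n) ℂ :=
  LineDeriv.lineDerivOpCLM ℝ (SchwartzMap (EN n) ℂ) v f + (2 * (π : ℂ) * I * c) • mulInnerS v f

lemma DopS_apply (c : ℂ) (v : EN n) (f : SchwartzMap (EN n) ℂ) (θ : EN n) :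
    DopS c v f θ = Dop c v (⇑f) θ := by
  simp only [DopS, Dop, SchwartzMap.add_apply, SchwartzMap.smul_apply,
    LineDeriv.lineDerivOpCLM_apply, SchwartzMap.lineDerivOp_apply_eq_fderiv, mulInnerS_apply, smul_eq_mul]
  ring

lemma Dop_coe (c : ℂ) (v : EN n) (f : SchwartzMap (EN n) ℂ) :
    Dop c v ⇑f = ⇑(DopS c v f) :=
  funext fun θ => (DopS_apply c v f θ).symm

lemma fderiv_conjS (f : SchwartzMap (EN n) ℂ) (θ v : EN n) :
    fderiv ℝ (⇑(conjS f)) θ v = starRingEnd ℂ (fderiv ℝ (⇑f) θ v) := by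
  have h : ⇑(conjS f) = (RCLike.conjLIE (K := ℂ)) ∘ ⇑f := rfl
  rw [h, LinearIsometryEquiv.comp_fderiv]
  rfl

lemma conjS_DopS (c : ℂ) (v : EN n) (f : SchwartzMap (EN n) ℂ) :
    conjS (DopS c v f) = DopS (-(starRingEnd ℂ c)) v (conjS f) := by
  ext θ
  rw [conjS_apply, DopS_apply, DopS_apply]
  simp only [Dop, map_add, map_mul, conj_I, conjS_apply, fderiv_conjS, conj_ofReal,
    map_ofNat]
  ring

lemma mul_integrable (f g : SchwartzMap (EN n) ℂ) :
    Integrable (fun θ => f θ * g θ) (volume : Measure (EN n)) := by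
  refine (g.integrable (μ := volume)).bdd_mul f.continuous.aestronglyMeasurable
    (c := ‖f.toBoundedContinuousFunction‖) (Filter.Eventually.of_forall fun x => ?_)
  exact f.toBoundedContinuousFunction.norm_coe_le_norm x

lemma ibp (f g : SchwartzMap (EN n) ℂ) (v : EN n) :
    ∫ θ : EN n, f θ * fderiv ℝ (⇑g) θ v = -∫ θ : EN n, fderiv ℝ (⇑f) θ v * g θ := by
  refine integral_mul_fderiv_eq_neg_fderiv_mul_of_integrable ?_ ?_ ?_
    (fun x _ => f.differentiableAt) (fun x _ => g.differentiableAt)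
  · simpa [LineDeriv.lineDerivOpCLM_apply, SchwartzMap.lineDerivOp_apply_eq_fderiv] using mul_integrable (LineDeriv.lineDerivOpCLM ℝ (SchwartzMap (EN n) ℂ) v f) g
  · simpa [LineDeriv.lineDerivOpCLM_apply, SchwartzMap.lineDerivOp_apply_eq_fderiv] using mul_integrable f (LineDeriv.lineDerivOpCLM ℝ (SchwartzMap (EN n) ℂ) v g)
  · exact mul_integrable f g

lemma Dadj (c : ℂ) (v : EN n) (f g : SchwartzMap (EN n) ℂ) :
    ∫ θ : EN n, f θ * DopS c v g θ = -∫ θ : EN n, DopS (-c) v f θ * g θ := by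
  have h1 : ∀ θ : EN n, f θ * DopS c v g θ
      = f θ * fderiv ℝ (⇑g) θ v + (2 * (π : ℂ) * I * c) * (mulInnerS v f θ * g θ) := by
    intro θ
    simp only [DopS, SchwartzMap.add_apply, SchwartzMap.smul_apply,
      LineDeriv.lineDerivOpCLM_apply, SchwartzMap.lineDerivOp_apply_eq_fderiv, mulInnerS_apply, smul_eq_mul]
    ring
  have h2 : ∀ θ : EN n, DopS (-c) v f θ * g θ
      = fderiv ℝ (⇑f) θ v * g θ + (-(2 * (π : ℂ) * I * c)) * (mulInnerS v f θ * g θ) := by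
    intro θ
    simp only [DopS, SchwartzMap.add_apply, SchwartzMap.smul_apply,
      LineDeriv.lineDerivOpCLM_apply, SchwartzMap.lineDerivOp_apply_eq_fderiv, mulInnerS_apply, smul_eq_mul]
    ring
  have i1 : Integrable (fun θ : EN n => f θ * fderiv ℝ (⇑g) θ v) volume := by
    simpa [LineDeriv.lineDerivOpCLM_apply, SchwartzMap.lineDerivOp_apply_eq_fderiv] using mul_integrable f (LineDeriv.lineDerivOpCLM ℝ (SchwartzMap (EN n) ℂ) v g)
  have i2 : Integrable (fun θ : EN n => (2 * (π : ℂ) * I * c) * (mulInnerS v f θ * g θ)) volume :=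
    (mul_integrable (mulInnerS v f) g).const_mul _
  have i3 : Integrable (fun θ : EN n => fderiv ℝ (⇑f) θ v * g θ) volume := by
    simpa [LineDeriv.lineDerivOpCLM_apply, SchwartzMap.lineDerivOp_apply_eq_fderiv] using mul_integrable (LineDeriv.lineDerivOpCLM ℝ (SchwartzMap (EN n) ℂ) v f) g
  have i4 : Integrable (fun θ : EN n => (-(2 * (π : ℂ) * I * c)) * (mulInnerS v f θ * g θ))
      volume := (mul_integrable (mulInnerS v f) g).const_mul _
  calc ∫ θ : EN n, f θ * DopS c v g θ
      = ∫ θ : EN n, (f θ * fderiv ℝ (⇑g) θ v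
          + (2 * (π : ℂ) * I * c) * (mulInnerS v f θ * g θ)) :=
        integral_congr_ae (Filter.Eventually.of_forall h1)
    _ = (∫ θ : EN n, f θ * fderiv ℝ (⇑g) θ v)
          + (2 * (π : ℂ) * I * c) * ∫ θ : EN n, mulInnerS v f θ * g θ := by
        rw [integral_add i1 i2, integral_const_mul]
    _ = (-∫ θ : EN n, fderiv ℝ (⇑f) θ v * g θ)
          + (2 * (π : ℂ) * I * c) * ∫ θ : EN n, mulInnerS v f θ * g θ := by rw [ibp]
    _ = -∫ θ : EN n, (fderiv ℝ (⇑f) θ v * g θ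
          + (-(2 * (π : ℂ) * I * c)) * (mulInnerS v f θ * g θ)) := by
        rw [integral_add i3 i4, integral_const_mul]; ring
    _ = -∫ θ : EN n, DopS (-c) v f θ * g θ := by
        rw [integral_congr_ae (Filter.Eventually.of_forall h2)]

lemma Dadj2 (c : ℂ) (v w : EN n) (f g : SchwartzMap (EN n) ℂ) :
    ∫ θ : EN n, f θ * DopS c v (DopS c w g) θ
      = ∫ θ : EN n, DopS (-c) w (DopS (-c) v f) θ * g θ := by
  rw [Dadj c v f (DopS c w g), Dadj c w (DopS (-c) v f) g, neg_neg]

end CSAux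

open CSAux in
/-- `Δ̂_G` and `Δ̂_Ḡ` are mutually adjoint on Schwartz functions:
`⟨Δ̂_Ḡ φ, ψ⟩ = ⟨φ, Δ̂_G ψ⟩` with `⟨φ,ψ⟩ = ∫_E φ conj ψ`; consequently, for
`t = k + is` with `s ∈ ℝ`, `⟨φ, (1/(2t))Δ̂_G ψ⟩ = ⟨(1/(2t̄))Δ̂_Ḡ φ, ψ⟩`. -/
theorem DeltaG_DeltaGbar_adjoint
    (n : ℕ) (k : ℕ) (hk : 0 < k) (b : Module.Basis (Fin n) ℝ (EN n))
    (σ : ℂ) (hσ : 0 < σ.im) (φ ψ : SchwartzMap (EN n) ℂ) :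
    (∫ θ : EN n, DeltaGbar k σ ⇑b ⇑φ θ * (starRingEnd ℂ) (ψ θ)) =
      (∫ θ : EN n, φ θ * (starRingEnd ℂ) (DeltaG k σ ⇑b ⇑ψ θ)) ∧
    ∀ s : ℝ,
      (∫ θ : EN n, φ θ *
          (starRingEnd ℂ) (1 / (2 * ((k : ℂ) + I * s)) * DeltaG k σ ⇑b ⇑ψ θ)) =
        ∫ θ : EN n,
          (1 / (2 * starRingEnd ℂ ((k : ℂ) + I * s)) * DeltaGbar k σ ⇑b ⇑φ θ) *
            (starRingEnd ℂ) (ψ θ) := by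
  -- abbreviations
  set coefB : ℂ := -(I * (k : ℂ) / (π : ℂ)) * (σ / (σ - starRingEnd ℂ σ)) ^ 2 with hcoefB
  have hc : -(starRingEnd ℂ ((starRingEnd ℂ σ)⁻¹)) = -σ⁻¹ := by
    simp [map_inv₀]
  -- conjugation of the iterated operator
  have hA : ∀ (p q : Fin n) (θ : EN n),
      starRingEnd ℂ (Dop (starRingEnd ℂ σ)⁻¹ (b p) (Dop (starRingEnd ℂ σ)⁻¹ (b q) ⇑ψ) θ)
        = DopS (-σ⁻¹) (b p) (DopS (-σ⁻¹) (b q) (conjS ψ)) θ := by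
    intro p q θ
    rw [Dop_coe, ← DopS_apply, ← conjS_apply, conjS_DopS, conjS_DopS, hc]
  -- coefficient identity
  have hcoef : starRingEnd ℂ
      (I * (k : ℂ) / (π : ℂ) * (starRingEnd ℂ σ / (starRingEnd ℂ σ - σ)) ^ 2) = coefB := by
    rw [hcoefB]
    simp only [map_div₀, map_mul, map_pow, map_sub, conj_I, Complex.conj_conj,
      Complex.conj_natCast, Complex.conj_ofReal]
    ring
  -- symmetry of the inverse Gram matrix
  have hsym : ∀ p q : Fin n, (Cmat ⇑b)⁻¹ q p = (Cmat ⇑b)⁻¹ p q := by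
    intro p q
    have h1 : (Cmat ⇑b).transpose = Cmat ⇑b := by
      ext i j
      simp only [Cmat, Matrix.transpose_apply, Matrix.of_apply]
      exact real_inner_comm _ _
    calc (Cmat ⇑b)⁻¹ q p = ((Cmat ⇑b)⁻¹).transpose p q := rfl
      _ = ((Cmat ⇑b).transpose)⁻¹ p q := by rw [Matrix.transpose_nonsing_inv]
      _ = (Cmat ⇑b)⁻¹ p q := by rw [h1]
  -- the two integrals, reduced to double sums
  have hR : (∫ θ : EN n, φ θ * (starRingEnd ℂ) (DeltaG k σ ⇑b ⇑ψ θ))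
      = ∑ p, ∑ q, (coefB * ((Cmat ⇑b)⁻¹ p q : ℂ)) *
          ∫ θ : EN n, DopS σ⁻¹ (b q) (DopS σ⁻¹ (b p) φ) θ * conjS ψ θ := by
    have hpt : ∀ θ : EN n, φ θ * (starRingEnd ℂ) (DeltaG k σ ⇑b ⇑ψ θ)
        = ∑ p, ∑ q, (coefB * ((Cmat ⇑b)⁻¹ p q : ℂ)) *
            (φ θ * DopS (-σ⁻¹) (b p) (DopS (-σ⁻¹) (b q) (conjS ψ)) θ) := by
      intro θ
      simp only [DeltaG, map_mul, map_sum, hA, Complex.conj_ofReal, hcoef, Finset.mul_sum]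
      refine Finset.sum_congr rfl fun p _ => Finset.sum_congr rfl fun q _ => ?_
      ring
    rw [integral_congr_ae (Filter.Eventually.of_forall hpt),
      integral_finset_sum _ (fun p _ => integrable_finset_sum _ (fun q _ =>
        (mul_integrable φ _).const_mul _))]
    refine Finset.sum_congr rfl fun p _ => ?_
    rw [integral_finset_sum _ (fun q _ => (mul_integrable φ _).const_mul _)]
    refine Finset.sum_congr rfl fun q _ => ?_
    rw [integral_const_mul]
    congr 1
    have h := Dadj2 (-σ⁻¹) (b p) (b q) φ (conjS ψ)
    rw [neg_neg] at h
    exact h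
  have hL : (∫ θ : EN n, DeltaGbar k σ ⇑b ⇑φ θ * (starRingEnd ℂ) (ψ θ))
      = ∑ p, ∑ q, (coefB * ((Cmat ⇑b)⁻¹ p q : ℂ)) *
          ∫ θ : EN n, DopS σ⁻¹ (b p) (DopS σ⁻¹ (b q) φ) θ * conjS ψ θ := by
    have hpt : ∀ θ : EN n, DeltaGbar k σ ⇑b ⇑φ θ * (starRingEnd ℂ) (ψ θ)
        = ∑ p, ∑ q, (coefB * ((Cmat ⇑b)⁻¹ p q : ℂ)) *
            (DopS σ⁻¹ (b p) (DopS σ⁻¹ (b q) φ) θ * conjS ψ θ) := by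
      intro θ
      simp only [DeltaGbar, Dop_coe, conjS_apply, Finset.sum_mul, Finset.mul_sum, ← hcoefB]
      refine Finset.sum_congr rfl fun p _ => Finset.sum_congr rfl fun q _ => ?_
      ring
    rw [integral_congr_ae (Filter.Eventually.of_forall hpt),
      integral_finset_sum _ (fun p _ => integrable_finset_sum _ (fun q _ =>
        (mul_integrable _ (conjS ψ)).const_mul _))]
    refine Finset.sum_congr rfl fun p _ => ?_
    rw [integral_finset_sum _ (fun q _ => (mul_integrable _ (conjS ψ)).const_mul _)]
    refine Finset.sum_congr rfl fun q _ => ?_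
    rw [integral_const_mul]
  have part1 : (∫ θ : EN n, DeltaGbar k σ ⇑b ⇑φ θ * (starRingEnd ℂ) (ψ θ)) =
      (∫ θ : EN n, φ θ * (starRingEnd ℂ) (DeltaG k σ ⇑b ⇑ψ θ)) := by
    rw [hL, hR, Finset.sum_comm]
    refine Finset.sum_congr rfl fun p _ => Finset.sum_congr rfl fun q _ => ?_
    rw [hsym]
  refine ⟨part1, fun s => ?_⟩
  have e1 : ∀ θ : EN n, φ θ *
      (starRingEnd ℂ) (1 / (2 * ((k : ℂ) + I * s)) * DeltaG k σ ⇑b ⇑ψ θ)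
      = (1 / (2 * starRingEnd ℂ ((k : ℂ) + I * s))) *
          (φ θ * (starRingEnd ℂ) (DeltaG k σ ⇑b ⇑ψ θ)) := by
    intro θ
    rw [map_mul, map_div₀, map_one, map_mul, map_ofNat]
    ring
  have e2 : ∀ θ : EN n,
      (1 / (2 * starRingEnd ℂ ((k : ℂ) + I * s)) * DeltaGbar k σ ⇑b ⇑φ θ) *
        (starRingEnd ℂ) (ψ θ)
      = (1 / (2 * starRingEnd ℂ ((k : ℂ) + I * s))) *
          (DeltaGbar k σ ⇑b ⇑φ θ * (starRingEnd ℂ) (ψ θ)) := by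
    intro θ; ring
  rw [integral_congr_ae (Filter.Eventually.of_forall e1),
    integral_congr_ae (Filter.Eventually.of_forall e2),
    integral_const_mul, integral_const_mul, part1]

end
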